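/- The polynomial g(t) = t^4 + 2t^3 + t^2 + t - 1 has a unique real root r in the open interval (0,1), and every other complex root of g has absolute value strictly greater than r. -/

import Mathlib

private lemma Fmono {a b : ℝ} (ha : 0 ≤ a) (hab : a < b) :
    a^4 + 2*a^3 + a^2 + a < b^4 + 2*b^3 + b^2 + b := by
  have h4 : a^4 ≤ b^4 := pow_le_pow_left₀ ha hab.le 4
  have h3 : a^3 ≤ b^3 := pow_le_pow_left₀ ha hab.le 3
  have h2 : a^2 ≤ b^2 := pow_le_pow_left₀ ha hab.le 2
  linarith

theorem stmt_5 :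
    ∃ r : ℝ, r ∈ Set.Ioo (0 : ℝ) 1 ∧
      r ^ 4 + 2 * r ^ 3 + r ^ 2 + r - 1 = 0 ∧
      (∀ r' : ℝ, r' ∈ Set.Ioo (0 : ℝ) 1 →
        r' ^ 4 + 2 * r' ^ 3 + r' ^ 2 + r' - 1 = 0 → r' = r) ∧
      (∀ z : ℂ, z ^ 4 + 2 * z ^ 3 + z ^ 2 + z - 1 = 0 →
        z ≠ (r : ℂ) → (r : ℝ) < ‖z‖) := by
  -- existence via IVT
  have hcont : ContinuousOn (fun t : ℝ => t^4 + 2*t^3 + t^2 + t - 1) (Set.Icc 0 1) := by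
    fun_prop
  have hiv := intermediate_value_Ioo (by norm_num : (0:ℝ) ≤ 1) hcont
  have h0 : (0:ℝ) ∈ Set.Ioo ((fun t : ℝ => t^4 + 2*t^3 + t^2 + t - 1) 0)
      ((fun t : ℝ => t^4 + 2*t^3 + t^2 + t - 1) 1) := by norm_num
  obtain ⟨r, hr, hfr⟩ := hiv h0
  simp only at hfr
  obtain ⟨hr0, hr1⟩ := hr
  refine ⟨r, ⟨hr0, hr1⟩, hfr, ?_, ?_⟩
  · -- uniqueness
    intro r' ⟨hr'0, hr'1⟩ hfr'
    rcases lt_trichotomy r' r with h | h | h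
    · exfalso; have := Fmono (le_of_lt hr'0) h; nlinarith
    · exact h
    · exfalso; have := Fmono (le_of_lt hr0) h; nlinarith
  · -- complex roots
    intro z hz hzr
    by_contra hle
    push_neg at hle
    set a := ‖z‖ with ha
    have ha0 : 0 ≤ a := norm_nonneg z
    have heq : z^4 + z^3 + z^3 + z^2 + z = 1 := by linear_combination hz
    have hre : (z^4).re + (z^3).re + (z^3).re + (z^2).re + z.re = 1 := by
      have := congrArg Complex.re heq
      simpa using this
    have habs : ∀ k : ℕ, (z^k).re ≤ a^k := by
      intro k
      calc (z^k).re ≤ ‖z^k‖ := Complex.re_le_norm _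
        _ = a^k := by rw [norm_pow]
    have hrez : z.re ≤ a := Complex.re_le_norm z
    have hFa : a^4 + 2*a^3 + a^2 + a ≤ 1 := by
      rcases eq_or_lt_of_le hle with h | h
      · rw [h]; linarith [hfr]
      · have := Fmono ha0 h; nlinarith [hfr]
    -- 1 ≤ a^4 + 2a^3 + a^2 + z.re
    have h1 : (1:ℝ) ≤ a^4 + 2*a^3 + a^2 + z.re := by
      have h4 := habs 4; have h3 := habs 3; have h2 := habs 2
      nlinarith [hre]
    have hrea : z.re = a := le_antisymm hrez (by nlinarith)
    have haeq : a = r := by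
      rcases eq_or_lt_of_le hle with h | h
      · exact h
      · exfalso; have := Fmono ha0 h; nlinarith [hfr]
    have him : z.im = 0 := by
      have hsq : a^2 = z.re * z.re + z.im * z.im := by
        rw [ha, Complex.sq_norm, Complex.normSq_apply]
      nlinarith [hsq, hrea]
    apply hzr
    apply Complex.ext
    · simp [hrea, haeq]
    · simp [him]
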